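/- Let A₊₁, A₋₁, A₊₂, A₋₂ be nonzero 2×2 complex matrices satisfying the simple-square-lattice unitarity conditions: (i) A₊ᵢ·A₋ᵢᴴ = 0 and A₋ᵢᴴ·A₊ᵢ = 0 for i = 1, 2; (ii) for {i, j} = {1, 2}: A₊ᵢ·A₋ⱼᴴ + A₊ⱼ·A₋ᵢᴴ = 0, A₊ᵢ·A₊ⱼᴴ + A₋ⱼ·A₋ᵢᴴ = 0, A₋ᵢᴴ·A₊ⱼ + A₋ⱼᴴ·A₊ᵢ = 0, and A₋ᵢᴴ·A₋ⱼ + A₊ⱼᴴ·A₊ᵢ = 0; (iii) Σ_h A_h·A_hᴴ = I = Σ_h A_hᴴ·A_h, the sums running over h ∈ {+1, −1, +2, −2}; and (iv) A₊₁ + A₋₁ + A₊₂ + A₋₂ = I. Then there exist α ∈ (0, 1) and a unitary 2×2 matrix U such that, writing β = √(1 − α²), the conjugated matrices U·A_h·Uᴴ are given either by A₊₁ = [[α², 0], [αβ, 0]], A₋₁ = [[0, −αβ], [0, α²]], A₊₂ = [[β², 0], [−αβ, 0]], A₋₂ = [[0, αβ], [0, β²]], or by the same expressions with the values of A₊₂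 and A₋₂ exchanged. -/

import Mathlib

open Matrix

noncomputable section QWaux
namespace QWaux

local notation "cj" => starRingEnd ℂ

abbrev V := Fin 2 → ℂ
abbrev M2 := Matrix (Fin 2) (Fin 2) ℂ

/-- the conjugate-perp of a vector -/
def J (x : V) : V := ![-(cj (x 1)), cj (x 0)]

lemma J0 (x : V) : J x 0 = -(cj (x 1)) := rfl
lemma J1 (x : V) : J x 1 = cj (x 0) := rfl

lemma vne (v : V) (h : v ≠ 0) : v 0 ≠ 0 ∨ v 1 ≠ 0 := by
  by_contra hc
  push_neg at hc
  exact h (funext fun i => by fin_cases i <;> simp [hc.1, hc.2])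

lemma Jne (v : V) (h : v ≠ 0) : J v ≠ 0 := by
  intro hJ
  apply h
  have h0 := congrFun hJ 0
  have h1 := congrFun hJ 1
  simp [J0, J1] at h0 h1
  exact funext fun i => by fin_cases i <;> simp [h0, h1]

lemma JJ (v : V) : J (J v) = -v := by
  funext i
  fin_cases i <;> simp [J0, J1]

lemma Jsmul (s : ℂ) (v : V) : J (s • v) = cj s • J v := by
  funext i
  fin_cases i <;> simp [J0, J1] <;> ring

lemma vmv_mul_vmv (u r x s : V) :
    vecMulVec u r * vecMulVec x s = (r ⬝ᵥ x) • vecMulVec u s := by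
  ext i j
  simp [mul_apply, vecMulVec_apply, dotProduct, Fin.sum_univ_two, Matrix.smul_apply]
  ring

lemma conjT_vmv (u r : V) : (vecMulVec u r)ᴴ = vecMulVec (star r) (star u) := by
  ext i j
  simp [vecMulVec_apply, conjTranspose_apply, mul_comm]

lemma vmv_smul_left (s : ℂ) (u r : V) : vecMulVec (s • u) r = s • vecMulVec u r := by
  ext i j; simp [vecMulVec_apply]; ring

lemma vmv_smul_right (s : ℂ) (u r : V) : vecMulVec u (s • r) = s • vecMulVec u r := by
  ext i j; simp [vecMulVec_apply]; ring

lemma vne' (v : V) (h : v ≠ 0) : ∃ i, v i ≠ 0 := by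
  rcases vne v h with h1 | h1
  exacts [⟨0, h1⟩, ⟨1, h1⟩]

lemma vmv_ne_zero (u r : V) (hu : u ≠ 0) (hr : r ≠ 0) : vecMulVec u r ≠ 0 := by
  obtain ⟨i, hi⟩ := vne' u hu
  obtain ⟨j, hj⟩ := vne' r hr
  intro h
  have := congrFun (congrFun h i) j
  simp [vecMulVec_apply] at this
  tauto

lemma scalar_of_smul_vmv (s : ℂ) (u r : V) (hu : u ≠ 0) (hr : r ≠ 0)
    (h : s • vecMulVec u r = 0) : s = 0 := by
  obtain ⟨i, hi⟩ := vne' u hu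
  obtain ⟨j, hj⟩ := vne' r hr
  have := congrFun (congrFun h i) j
  simp [vecMulVec_apply, Matrix.smul_apply] at this
  tauto

lemma det_zero_left (M N : M2) (h : M * N = 0) (hN : N ≠ 0) : M.det = 0 := by
  by_contra hd
  have : IsUnit M.det := isUnit_iff_ne_zero.mpr hd
  have hNz : N = 0 := by
    have h2 : M⁻¹ * (M * N) = 0 := by rw [h]; simp
    rwa [← mul_assoc, Matrix.nonsing_inv_mul M this, one_mul] at h2
  exact hN hNz

lemma det_zero_right (M N : M2) (h : M * N = 0) (hM : M ≠ 0) : N.det = 0 := by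
  by_contra hd
  have : IsUnit N.det := isUnit_iff_ne_zero.mpr hd
  have hMz : M = 0 := by
    have h2 : (M * N) * N⁻¹ = 0 := by rw [h]; simp
    rwa [mul_assoc, Matrix.mul_nonsing_inv N this, mul_one] at h2
  exact hM hMz

/-- rank-one factorization of a singular nonzero 2×2 matrix -/
lemma rank_one (M : M2) (hM : M ≠ 0) (hd : M.det = 0) :
    ∃ u r : V, u ≠ 0 ∧ r ≠ 0 ∧ M = vecMulVec u r := by
  rw [Matrix.det_fin_two] at hd
  by_cases h00 : M 0 0 ≠ 0
  · refine ⟨![M 0 0, M 1 0], ![1, M 0 1 / M 0 0], ?_, ?_, ?_⟩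
    · intro h; have := congrFun h 0; simp at this; exact h00 this
    · intro h; have := congrFun h 0; simp at this
    · ext i j; fin_cases i <;> fin_cases j <;> simp [vecMulVec_apply]
      · field_simp
      · field_simp
        linear_combination hd
  · push_neg at h00
    by_cases h01 : M 0 1 ≠ 0
    · refine ⟨![M 0 1, M 1 1], ![M 0 0 / M 0 1, 1], ?_, ?_, ?_⟩
      · intro h; have := congrFun h 0; simp at this; exact h01 this
      · intro h; have := congrFun h 1; simp at this
      · ext i j; fin_cases i <;> fin_cases j <;> simp [vecMulVec_apply]
        · field_simp
        · field_simp
          linear_combination -hd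
    · push_neg at h01
      refine ⟨![0, 1], ![M 1 0, M 1 1], ?_, ?_, ?_⟩
      · intro h; have := congrFun h 1; simp at this
      · intro h
        apply hM
        ext i j
        have h10 := congrFun h 0; have h11 := congrFun h 1
        simp at h10 h11
        fin_cases i <;> fin_cases j <;> simp [h00, h01, h10, h11]
      · ext i j; fin_cases i <;> fin_cases j <;> simp [vecMulVec_apply, h00, h01]

/-- perp classification in dimension 2 -/
lemma perp (x y : V) (hx : x ≠ 0) (hy : y ≠ 0) (h : x ⬝ᵥ y = 0) :
    ∃ μ : ℂ, μ ≠ 0 ∧ y = μ • ![-(x 1), x 0] := by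
  simp [dotProduct, Fin.sum_univ_two] at h
  rcases vne x hx with hx0 | hx1
  · refine ⟨y 1 / x 0, ?_, ?_⟩
    · intro hμ
      rw [div_eq_zero_iff] at hμ
      rcases hμ with h1 | h1
      · apply hy; funext i; fin_cases i
        · have : x 0 * y 0 = 0 := by rw [h1] at h; linear_combination h
          simpa using (mul_eq_zero.mp this).resolve_left hx0
        · simpa using h1
      · exact hx0 h1
    · funext i; fin_cases i
      · show y 0 = y 1 / x 0 * (-(x 1))
        field_simp
        linear_combination h
      · show y 1 = y 1 / x 0 * x 0
        field_simp
  · refine ⟨-(y 0) / x 1, ?_, ?_⟩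
    · intro hμ
      rw [div_eq_zero_iff] at hμ
      rcases hμ with h1 | h1
      · apply hy; funext i; fin_cases i
        · simpa using h1
        · have hy0 : y 0 = 0 := by simpa using h1
          have : x 1 * y 1 = 0 := by rw [hy0] at h; linear_combination h
          simpa using (mul_eq_zero.mp this).resolve_left hx1
      · exact hx1 h1
    · funext i; fin_cases i
      · show y 0 = -(y 0) / x 1 * (-(x 1))
        field_simp
      · show y 1 = -(y 0) / x 1 * x 0
        field_simp
        linear_combination h


lemma dot_self_ne (a : V) (ha : a ≠ 0) : star a ⬝ᵥ a ≠ 0 := by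
  have h : star a ⬝ᵥ a = ((Complex.normSq (a 0) + Complex.normSq (a 1) : ℝ) : ℂ) := by
    simp [dotProduct, Fin.sum_univ_two, Pi.star_apply, Complex.star_def]
    push_cast
    rw [Complex.normSq_eq_conj_mul_self, Complex.normSq_eq_conj_mul_self]
  rw [h]
  have : 0 < Complex.normSq (a 0) + Complex.normSq (a 1) := by
    rcases vne a ha with h1 | h1
    · have := Complex.normSq_pos.mpr h1
      have := Complex.normSq_nonneg (a 1); linarith
    · have := Complex.normSq_pos.mpr h1
      have := Complex.normSq_nonneg (a 0); linarith
  exact_mod_cast this.ne'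

lemma star_ne (v : V) (h : v ≠ 0) : star v ≠ 0 := by
  intro hs
  apply h
  funext i
  have := congrFun hs i
  simp [Pi.star_apply] at this
  simpa using congrArg (starRingEnd ℂ) this

lemma dotJJ (a e : V) : star (J a) ⬝ᵥ J e = star e ⬝ᵥ a := by
  simp [J, dotProduct, Fin.sum_univ_two, Pi.star_apply, Complex.star_def]
  ring

lemma dotJswap (a e : V) : star (J e) ⬝ᵥ a = -(star (J a) ⬝ᵥ e) := by
  simp [J, dotProduct, Fin.sum_univ_two, Pi.star_apply, Complex.star_def]
  ring

lemma dotJself (a : V) : star (J a) ⬝ᵥ J a = star a ⬝ᵥ a := dotJJ a a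

lemma dot_b_Jb (b : V) : b ⬝ᵥ star (J b) = 0 := by
  simp [J, dotProduct, Fin.sum_univ_two, Pi.star_apply, Complex.star_def]
  ring

lemma perpJ (x y : V) (hx : x ≠ 0) (hy : y ≠ 0) (h : star y ⬝ᵥ x = 0) :
    ∃ μ : ℂ, μ ≠ 0 ∧ y = μ • J x := by
  have hsy : x ⬝ᵥ star y = 0 := by rwa [dotProduct_comm]
  obtain ⟨μ, hμ, hE⟩ := perp x (star y) hx (star_ne y hy) hsy
  refine ⟨cj μ, by simpa using hμ, ?_⟩
  funext i
  have h0 := congrFun hE 0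
  have h1 := congrFun hE 1
  simp [Pi.star_apply, Complex.star_def] at h0 h1
  fin_cases i
  · show y 0 = cj μ * J x 0
    rw [J0]
    have := congrArg (starRingEnd ℂ) h0
    simpa using this
  · show y 1 = cj μ * J x 1
    rw [J1]
    have := congrArg (starRingEnd ℂ) h1
    simpa using this

lemma parJ (x y : V) (hx : x ≠ 0) (hy : y ≠ 0) (h : star (J x) ⬝ᵥ y = 0) :
    ∃ lam : ℂ, lam ≠ 0 ∧ y = lam • x := by
  have hJx : star (J x) ≠ 0 := star_ne _ (Jne x hx)
  obtain ⟨μ, hμ, hE⟩ := perp (star (J x)) y hJx hy h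
  refine ⟨-μ, by simpa using hμ, ?_⟩
  funext i
  have := congrFun hE i
  fin_cases i <;>
    simp [J0, J1, Pi.star_apply, Complex.star_def] at this ⊢ <;>
    rw [this] <;> ring

lemma rows_prop (x f y g : V) (c d : ℂ) (hc : c ≠ 0) (hx : x ≠ 0) (hf : f ≠ 0)
    (h : c • vecMulVec x f = d • vecMulVec y g) : ∃ μ : ℂ, μ ≠ 0 ∧ f = μ • g := by
  obtain ⟨i, hi⟩ := vne' x hx
  have hrs : ∀ j, f j = (d * y i / (c * x i)) * g j := by
    intro j
    have h2 := congrFun (congrFun h i) j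
    simp [Matrix.smul_apply, vecMulVec_apply, smul_eq_mul] at h2
    field_simp
    linear_combination h2
  have hfμ : f = (d * y i / (c * x i)) • g := funext fun j => hrs j
  refine ⟨_, ?_, hfμ⟩
  intro h0
  rw [h0, zero_smul] at hfμ
  exact hf hfμ

lemma vmv_neg_left (u r : V) : vecMulVec (-u) r = -(vecMulVec u r) := by
  ext i j; simp [vecMulVec_apply]

lemma conj_vmv (Umat : M2) (u r : V) :
    Umat * vecMulVec u r * Umatᴴ = vecMulVec (Umat *ᵥ u) (r ᵥ* Umatᴴ) := by
  ext i j
  fin_cases i <;> fin_cases j <;>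
  simp [mul_apply, vecMulVec_apply, mulVec, vecMul, dotProduct, Fin.sum_univ_two] <;>
  ring


set_option maxHeartbeats 1000000 in
lemma core (a b : V) (t p q : ℂ) (ha : a ≠ 0) (hb : b ≠ 0) (hp : p ≠ 0)
    (hnorm : vecMulVec a b * (vecMulVec a b)ᴴ
      + (t • vecMulVec (J a) (J b)) * (t • vecMulVec (J a) (J b))ᴴ
      + (p • vecMulVec (J a) b) * (p • vecMulVec (J a) b)ᴴ
      + (q • vecMulVec a (J b)) * (q • vecMulVec a (J b))ᴴ = 1)
    (hsum : vecMulVec a b + t • vecMulVec (J a) (J b)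
      + p • vecMulVec (J a) b + q • vecMulVec a (J b) = 1) :
    ∃ α : ℝ, 0 < α ∧ α < 1 ∧ ∃ U : M2, U * Uᴴ = 1 ∧ Uᴴ * U = 1 ∧
      (U * vecMulVec a b * Uᴴ
          = !![((α ^ 2 : ℝ) : ℂ), 0; ((α * Real.sqrt (1 - α ^ 2) : ℝ) : ℂ), 0] ∧
       U * (t • vecMulVec (J a) (J b)) * Uᴴ
          = !![0, ((-(α * Real.sqrt (1 - α ^ 2)) : ℝ) : ℂ); 0, ((α ^ 2 : ℝ) : ℂ)] ∧
       U * (p • vecMulVec (J a) b) * Uᴴ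
          = !![(((Real.sqrt (1 - α ^ 2)) ^ 2 : ℝ) : ℂ), 0;
               ((-(α * Real.sqrt (1 - α ^ 2)) : ℝ) : ℂ), 0] ∧
       U * (q • vecMulVec a (J b)) * Uᴴ
          = !![0, ((α * Real.sqrt (1 - α ^ 2) : ℝ) : ℂ);
               0, (((Real.sqrt (1 - α ^ 2)) ^ 2 : ℝ) : ℂ)]) := by
  have hs00 := congrFun (congrFun hsum 0) 0
  have hs01 := congrFun (congrFun hsum 0) 1
  have hs10 := congrFun (congrFun hsum 1) 0
  have hs11 := congrFun (congrFun hsum 1) 1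
  simp only [Matrix.add_apply, Matrix.smul_apply, vecMulVec_apply, one_apply, J0, J1,
    smul_eq_mul, Fin.isValue, one_ne_zero, zero_ne_one, if_true, if_false,
    ite_true, ite_false, reduceIte] at hs00 hs01 hs10 hs11
  have hn00 := congrFun (congrFun hnorm 0) 0
  have hn01 := congrFun (congrFun hnorm 0) 1
  have hn10 := congrFun (congrFun hnorm 1) 0
  have hn11 := congrFun (congrFun hnorm 1) 1
  simp only [Matrix.add_apply, mul_apply, conjTranspose_apply, Matrix.smul_apply, vecMulVec_apply,
    one_apply, J0, J1, smul_eq_mul, Fin.sum_univ_two, Complex.star_def, _root_.map_mul, map_neg,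
    Complex.conj_conj, Fin.isValue, one_ne_zero, zero_ne_one, if_true, if_false,
    ite_true, ite_false, reduceIte] at hn00 hn01 hn10 hn11
  -- key scalar identities
  have T1 : (cj (a 0) * a 0 + cj (a 1) * a 1) * (cj (b 0) * b 0 + cj (b 1) * b 1)
      = cj (b 0) * cj (a 0) + cj (b 1) * cj (a 1) := by
    linear_combination (cj (a 0) * cj (b 0)) * hs00 + (cj (a 0) * cj (b 1)) * hs01
      + (cj (a 1) * cj (b 0)) * hs10 + (cj (a 1) * cj (b 1)) * hs11
  have T2 : p * ((cj (a 0) * a 0 + cj (a 1) * a 1) * (cj (b 0) * b 0 + cj (b 1) * b 1))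
      = a 0 * cj (b 1) - a 1 * cj (b 0) := by
    linear_combination (-(a 1) * cj (b 0)) * hs00 + (-(a 1) * cj (b 1)) * hs01
      + (a 0 * cj (b 0)) * hs10 + (a 0 * cj (b 1)) * hs11
  have T3 : q * ((cj (a 0) * a 0 + cj (a 1) * a 1) * (cj (b 0) * b 0 + cj (b 1) * b 1))
      = cj (a 1) * b 0 - cj (a 0) * b 1 := by
    linear_combination (cj (a 0) * (-(b 1))) * hs00 + (cj (a 0) * b 0) * hs01
      + (cj (a 1) * (-(b 1))) * hs10 + (cj (a 1) * b 0) * hs11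
  have T4 : t * ((cj (a 0) * a 0 + cj (a 1) * a 1) * (cj (b 0) * b 0 + cj (b 1) * b 1))
      = a 0 * b 0 + a 1 * b 1 := by
    linear_combination (-(a 1) * (-(b 1))) * hs00 + (-(a 1) * b 0) * hs01
      + (a 0 * (-(b 1))) * hs10 + (a 0 * b 0) * hs11
  have T5 : (cj (a 0) * a 0 + cj (a 1) * a 1) *
      ((cj (a 0) * a 0 + cj (a 1) * a 1) * (cj (b 0) * b 0 + cj (b 1) * b 1) * (1 + q * cj q))
      = cj (a 0) * a 0 + cj (a 1) * a 1 := by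
    linear_combination (cj (a 0) * a 0) * hn00 + (cj (a 0) * a 1) * hn01
      + (cj (a 1) * a 0) * hn10 + (cj (a 1) * a 1) * hn11
  -- real quantities
  set NA : ℝ := Complex.normSq (a 0) + Complex.normSq (a 1) with hNAdef
  set NB : ℝ := Complex.normSq (b 0) + Complex.normSq (b 1) with hNBdef
  set S : ℝ := NA * NB with hSdef
  set P : ℝ := Complex.normSq p with hPdef
  have hNAc : ((NA : ℝ) : ℂ) = cj (a 0) * a 0 + cj (a 1) * a 1 := by
    rw [hNAdef]; push_cast
    rw [Complex.normSq_eq_conj_mul_self, Complex.normSq_eq_conj_mul_self]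
  have hNBc : ((NB : ℝ) : ℂ) = cj (b 0) * b 0 + cj (b 1) * b 1 := by
    rw [hNBdef]; push_cast
    rw [Complex.normSq_eq_conj_mul_self, Complex.normSq_eq_conj_mul_self]
  have hSc : ((S : ℝ) : ℂ)
      = (cj (a 0) * a 0 + cj (a 1) * a 1) * (cj (b 0) * b 0 + cj (b 1) * b 1) := by
    rw [hSdef]; push_cast; rw [hNAc, hNBc]
  have hNApos : 0 < NA := by
    rcases vne a ha with h | h
    · have := Complex.normSq_pos.mpr h
      have := Complex.normSq_nonneg (a 1); rw [hNAdef]; linarith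
    · have := Complex.normSq_pos.mpr h
      have := Complex.normSq_nonneg (a 0); rw [hNAdef]; linarith
  have hNBpos : 0 < NB := by
    rcases vne b hb with h | h
    · have := Complex.normSq_pos.mpr h
      have := Complex.normSq_nonneg (b 1); rw [hNBdef]; linarith
    · have := Complex.normSq_pos.mpr h
      have := Complex.normSq_nonneg (b 0); rw [hNBdef]; linarith
  have hSpos : 0 < S := mul_pos hNApos hNBpos
  have hPpos : 0 < P := Complex.normSq_pos.mpr hp
  have hNAne : ((NA : ℝ) : ℂ) ≠ 0 := by exact_mod_cast hNApos.ne'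
  have hScne : ((S : ℝ) : ℂ) ≠ 0 := by exact_mod_cast hSpos.ne'
  -- complex scalar consequences
  have Esigc : cj (a 0) * cj (b 0) + cj (a 1) * cj (b 1) = ((S : ℝ) : ℂ) := by
    rw [hSc]; linear_combination -T1
  have Esig : a 0 * b 0 + a 1 * b 1 = ((S : ℝ) : ℂ) := by
    have := congrArg cj Esigc
    simpa [map_add, _root_.map_mul, Complex.conj_conj, Complex.conj_ofReal] using this
  have Et : t = 1 := by
    have h1 : t * ((S : ℝ) : ℂ) = ((S : ℝ) : ℂ) := by
      rw [hSc]; rw [hSc] at Esig; linear_combination T4 + Esig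
    field_simp at h1
    tauto
  have Etau : cj (b 0) * a 1 - cj (b 1) * a 0 = -(p * ((S : ℝ) : ℂ)) := by
    rw [hSc]; linear_combination T2
  have Etauc : b 0 * cj (a 1) - b 1 * cj (a 0) = -(cj p * ((S : ℝ) : ℂ)) := by
    have := congrArg cj Etau
    simpa [map_add, _root_.map_mul, map_sub, map_neg, Complex.conj_conj,
      Complex.conj_ofReal] using this
  have Eq : q = -cj p := by
    have h1 : q * ((S : ℝ) : ℂ) = -cj p * ((S : ℝ) : ℂ) := by
      linear_combination T3 + Etauc + q * hSc
    exact mul_right_cancel₀ hScne h1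
  have E7c : ((S : ℝ) : ℂ) * (1 + p * cj p) = 1 := by
    have h1 : ((NA : ℝ) : ℂ) * (((S : ℝ) : ℂ) * (1 + p * cj p))
        = ((NA : ℝ) : ℂ) := by
      rw [hNAc, hSc]
      have hq : q * cj q = p * cj p := by
        rw [Eq]; simp [map_neg, Complex.conj_conj]; ring
      linear_combination T5 - (cj (a 0) * a 0 + cj (a 1) * a 1) *
        ((cj (a 0) * a 0 + cj (a 1) * a 1) * (cj (b 0) * b 0 + cj (b 1) * b 1)) * hq
    exact mul_left_cancel₀ hNAne (by rw [h1, mul_one])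
  have E7 : S * (1 + P) = 1 := by
    have : ((S * (1 + P) : ℝ) : ℂ) = 1 := by
      push_cast
      rw [hPdef, ← Complex.mul_conj]
      exact E7c
    exact_mod_cast this
  -- parameters
  set α : ℝ := Real.sqrt S with hαdef
  have hα2 : α ^ 2 = S := Real.sq_sqrt hSpos.le
  have hαpos : 0 < α := Real.sqrt_pos.mpr hSpos
  have hSlt1 : S < 1 := by nlinarith [mul_pos hSpos hPpos]
  have hαlt1 : α < 1 := by nlinarith [hα2, hαpos]
  have h1mα : 1 - α ^ 2 = S * P := by rw [hα2]; nlinarith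
  set R : ℝ := Real.sqrt P with hRdef
  have hRpos : 0 < R := Real.sqrt_pos.mpr hPpos
  have hR2 : R ^ 2 = P := Real.sq_sqrt hPpos.le
  have hβ : Real.sqrt (1 - α ^ 2) = α * R := by
    rw [h1mα, hαdef, hRdef, ← Real.sqrt_mul hSpos.le]
  have hPc : ((P : ℝ) : ℂ) = p * cj p := by
    rw [hPdef]; exact_mod_cast (Complex.mul_conj p).symm
  have hRc2 : ((R : ℝ) : ℂ) * ((R : ℝ) : ℂ) = p * cj p := by
    rw [← hPc]
    have : R * R = P := Real.mul_self_sqrt hPpos.le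
    exact_mod_cast this
  have hRcne : ((R : ℝ) : ℂ) ≠ 0 := by exact_mod_cast hRpos.ne'
  -- cast lemmas for the target entries
  have c1 : ((α ^ 2 : ℝ) : ℂ) = ((S : ℝ) : ℂ) := by rw [hα2]
  have c2 : ((α * Real.sqrt (1 - α ^ 2) : ℝ) : ℂ) = ((S : ℝ) : ℂ) * ((R : ℝ) : ℂ) := by
    have h : α * Real.sqrt (1 - α ^ 2) = S * R := by rw [hβ, ← hα2]; ring
    rw [h]; push_cast; ring
  have c3 : (((Real.sqrt (1 - α ^ 2)) ^ 2 : ℝ) : ℂ) = ((S : ℝ) : ℂ) * (p * cj p) := by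
    have h : (Real.sqrt (1 - α ^ 2)) ^ 2 = S * P := by
      rw [Real.sq_sqrt (by nlinarith : (0:ℝ) ≤ 1 - α ^ 2), h1mα]
    rw [h]; push_cast; rw [hPc]
  -- the unitary
  set cc : ℝ := Real.sqrt NB with hccdef
  have hccpos : 0 < cc := Real.sqrt_pos.mpr hNBpos
  have hccne : ((cc : ℝ) : ℂ) ≠ 0 := by exact_mod_cast hccpos.ne'
  have hC2 : ((cc : ℝ) : ℂ) * ((cc : ℝ) : ℂ) = cj (b 0) * b 0 + cj (b 1) * b 1 := by
    rw [← hNBc]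
    have : cc * cc = NB := Real.mul_self_sqrt hNBpos.le
    exact_mod_cast this
  obtain ⟨ω, hω1, hω3, hω4⟩ :
      ∃ ω : ℂ, ω * p = -((R : ℝ) : ℂ) ∧ ω * cj ω = 1 ∧ cj ω * cj p = -((R : ℝ) : ℂ) := by
    refine ⟨-cj p / ((R : ℝ) : ℂ), ?_, ?_, ?_⟩
    · field_simp
      linear_combination hRc2
    · rw [map_div₀, map_neg, Complex.conj_conj, Complex.conj_ofReal]
      field_simp
      linear_combination -hRc2
    · rw [map_div₀, map_neg, Complex.conj_conj, Complex.conj_ofReal]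
      field_simp
      linear_combination hRc2
  obtain ⟨dd, hddc, hdd⟩ : ∃ d : ℂ, cj d = d ∧ d * ((cc : ℝ) : ℂ) = 1 := by
    refine ⟨((cc : ℝ) : ℂ)⁻¹, ?_, ?_⟩
    · rw [map_inv₀, Complex.conj_ofReal]
    · field_simp
  set Sc : ℂ := ((S : ℝ) : ℂ) with hScdef
  set Rc : ℂ := ((R : ℝ) : ℂ) with hRcdef
  set C : ℂ := ((cc : ℝ) : ℂ) with hCdef
  set U : M2 := !![dd * b 0, dd * b 1;
                   dd * (ω * -cj (b 1)), dd * (ω * cj (b 0))] with hUdef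
  -- vector computations
  have hUa : U *ᵥ a = ![dd * Sc, dd * (ω * -(p * Sc))] := by
    funext i
    fin_cases i <;>
      simp [hUdef, mulVec, dotProduct, Fin.sum_univ_two]
    · linear_combination dd * Esig
    · linear_combination dd * ω * Etau
  have hUJa : U *ᵥ (J a) = ![dd * (cj p * Sc), dd * (ω * Sc)] := by
    funext i
    fin_cases i <;>
      simp [hUdef, mulVec, dotProduct, Fin.sum_univ_two, J0, J1]
    · linear_combination -dd * Etauc
    · linear_combination dd * ω * Esigc
  have hbU : b ᵥ* Uᴴ = ![C, 0] := by
    funext j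
    fin_cases j <;>
      simp [hUdef, vecMul, dotProduct, Fin.sum_univ_two, conjTranspose_apply,
        _root_.map_mul, map_neg, Complex.conj_conj, hddc]
    · linear_combination C * hdd - dd * hC2
    · ring
  have hJbU : (J b) ᵥ* Uᴴ = ![0, cj ω * C] := by
    funext j
    fin_cases j <;>
      simp [hUdef, vecMul, dotProduct, Fin.sum_univ_two, conjTranspose_apply,
        _root_.map_mul, map_neg, Complex.conj_conj, hddc, J0, J1]
    · ring
    · linear_combination cj ω * C * hdd - dd * cj ω * hC2
  refine ⟨α, hαpos, hαlt1, U, ?_, ?_, ?_, ?_, ?_, ?_⟩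
  · -- U * Uᴴ = 1
    ext i j
    fin_cases i <;> fin_cases j <;>
      simp [hUdef, mul_apply, conjTranspose_apply, Fin.sum_univ_two, one_apply,
        _root_.map_mul, map_neg, Complex.conj_conj, hddc]
    · linear_combination (dd * C + 1) * hdd - dd ^ 2 * hC2
    · ring
    · ring
    · linear_combination dd ^ 2 * (cj (b 0) * b 0 + cj (b 1) * b 1) * hω3
        + (dd * C + 1) * hdd - dd ^ 2 * hC2
  · -- Uᴴ * U = 1
    ext i j
    fin_cases i <;> fin_cases j <;>
      simp [hUdef, mul_apply, conjTranspose_apply, Fin.sum_univ_two, one_apply,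
        _root_.map_mul, map_neg, Complex.conj_conj, hddc]
    · linear_combination dd ^ 2 * (cj (b 1) * b 1) * hω3 + (dd * C + 1) * hdd - dd ^ 2 * hC2
    · linear_combination -dd ^ 2 * (cj (b 0) * b 1) * hω3
    · linear_combination -dd ^ 2 * (cj (b 1) * b 0) * hω3
    · linear_combination dd ^ 2 * (cj (b 0) * b 0) * hω3 + (dd * C + 1) * hdd - dd ^ 2 * hC2
  · -- A₊₁
    rw [conj_vmv, hUa, hbU]
    ext i j
    fin_cases i <;> fin_cases j <;>
      simp [vecMulVec_apply, Complex.ofReal_neg, c1, c2]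
    · linear_combination Sc * hdd
    · linear_combination -dd * Sc * C * hω1 + Sc * Rc * hdd
  · -- A₋₁
    rw [Et, one_smul, conj_vmv, hUJa, hJbU]
    ext i j
    fin_cases i <;> fin_cases j <;>
      simp [vecMulVec_apply, Complex.ofReal_neg, c1, c2]
    · linear_combination dd * Sc * C * hω4 - Sc * Rc * hdd
    · linear_combination dd * Sc * C * hω3 + Sc * hdd
  · -- A₊₂
    rw [Matrix.mul_smul, Matrix.smul_mul, conj_vmv, hUJa, hbU]
    ext i j
    fin_cases i <;> fin_cases j <;>
      simp [vecMulVec_apply, Complex.ofReal_neg, c2, c3, Matrix.smul_apply]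
    · linear_combination p * cj p * Sc * hdd
    · linear_combination dd * Sc * C * hω1 - Sc * Rc * hdd
  · -- A₋₂
    rw [Eq, Matrix.mul_smul, Matrix.smul_mul, conj_vmv, hUa, hJbU]
    ext i j
    fin_cases i <;> fin_cases j <;>
      simp [vecMulVec_apply, Complex.ofReal_neg, c2, c3, Matrix.smul_apply]
    · linear_combination -dd * Sc * C * hω4 + Sc * Rc * hdd
    · linear_combination cj p * p * Sc * dd * C * hω3 + p * cj p * Sc * hdd

end QWaux

open QWaux

/-- Classification of quantum walks with a two-dimensional coin on the simple square
lattice. Writing `Ap1, Am1, Ap2, Am2` for the transition matrices `A₊₁, A₋₁, A₊₂, A₋₂`,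
if these are nonzero and satisfy the simple-square-lattice unitarity conditions
(i)–(iii) together with the normalization `A₊₁ + A₋₁ + A₊₂ + A₋₂ = 1`, then there are
`α ∈ (0,1)` and a unitary `U` such that, with `β = √(1−α²)`, the matrices `U·A_h·Uᴴ`
take the canonical Weyl form — either as displayed or with the values of `A₊₂` and
`A₋₂` exchanged. -/
theorem square_lattice_two_dim_coin_classification
    (Ap1 Am1 Ap2 Am2 : Matrix (Fin 2) (Fin 2) ℂ)
    (hp1 : Ap1 ≠ 0) (hm1 : Am1 ≠ 0) (hp2 : Ap2 ≠ 0) (hm2 : Am2 ≠ 0)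
    -- (i)
    (h1a : Ap1 * Am1ᴴ = 0) (h1b : Am1ᴴ * Ap1 = 0)
    (h2a : Ap2 * Am2ᴴ = 0) (h2b : Am2ᴴ * Ap2 = 0)
    -- (ii) for (i,j) = (1,2) and (2,1)
    (h12a : Ap1 * Am2ᴴ + Ap2 * Am1ᴴ = 0)
    (h21a : Ap2 * Am1ᴴ + Ap1 * Am2ᴴ = 0)
    (h12b : Ap1 * Ap2ᴴ + Am2 * Am1ᴴ = 0)
    (h21b : Ap2 * Ap1ᴴ + Am1 * Am2ᴴ = 0)
    (h12c : Am1ᴴ * Ap2 + Am2ᴴ * Ap1 = 0)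
    (h21c : Am2ᴴ * Ap1 + Am1ᴴ * Ap2 = 0)
    (h12d : Am1ᴴ * Am2 + Ap2ᴴ * Ap1 = 0)
    (h21d : Am2ᴴ * Am1 + Ap1ᴴ * Ap2 = 0)
    -- (iii)
    (hnorm1 : Ap1 * Ap1ᴴ + Am1 * Am1ᴴ + Ap2 * Ap2ᴴ + Am2 * Am2ᴴ = 1)
    (hnorm2 : Ap1ᴴ * Ap1 + Am1ᴴ * Am1 + Ap2ᴴ * Ap2 + Am2ᴴ * Am2 = 1)
    -- (iv)
    (hsum : Ap1 + Am1 + Ap2 + Am2 = 1) :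
    ∃ α : ℝ, 0 < α ∧ α < 1 ∧
      ∃ U : Matrix (Fin 2) (Fin 2) ℂ, U * Uᴴ = 1 ∧ Uᴴ * U = 1 ∧
        ((U * Ap1 * Uᴴ = !![((α ^ 2 : ℝ) : ℂ), 0;
            ((α * Real.sqrt (1 - α ^ 2) : ℝ) : ℂ), 0] ∧
          U * Am1 * Uᴴ = !![0, ((-(α * Real.sqrt (1 - α ^ 2)) : ℝ) : ℂ);
            0, ((α ^ 2 : ℝ) : ℂ)] ∧
          U * Ap2 * Uᴴ = !![(((Real.sqrt (1 - α ^ 2)) ^ 2 : ℝ) : ℂ), 0;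
            ((-(α * Real.sqrt (1 - α ^ 2)) : ℝ) : ℂ), 0] ∧
          U * Am2 * Uᴴ = !![0, ((α * Real.sqrt (1 - α ^ 2) : ℝ) : ℂ);
            0, (((Real.sqrt (1 - α ^ 2)) ^ 2 : ℝ) : ℂ)]) ∨
         (U * Ap1 * Uᴴ = !![((α ^ 2 : ℝ) : ℂ), 0;
            ((α * Real.sqrt (1 - α ^ 2) : ℝ) : ℂ), 0] ∧
          U * Am1 * Uᴴ = !![0, ((-(α * Real.sqrt (1 - α ^ 2)) : ℝ) : ℂ);
            0, ((α ^ 2 : ℝ) : ℂ)] ∧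
          U * Am2 * Uᴴ = !![(((Real.sqrt (1 - α ^ 2)) ^ 2 : ℝ) : ℂ), 0;
            ((-(α * Real.sqrt (1 - α ^ 2)) : ℝ) : ℂ), 0] ∧
          U * Ap2 * Uᴴ = !![0, ((α * Real.sqrt (1 - α ^ 2) : ℝ) : ℂ);
            0, (((Real.sqrt (1 - α ^ 2)) ^ 2 : ℝ) : ℂ)])) := by
  classical
  have hm1H : Am1ᴴ ≠ 0 := fun h => hm1 (Matrix.conjTranspose_eq_zero.mp h)
  have hm2H : Am2ᴴ ≠ 0 := fun h => hm2 (Matrix.conjTranspose_eq_zero.mp h)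
  have d1 : Ap1.det = 0 := det_zero_left _ _ h1a hm1H
  have d2 : Am1.det = 0 := by
    have := det_zero_right _ _ h1a hp1
    rw [Matrix.det_conjTranspose] at this
    exact star_eq_zero.mp this
  have d3 : Ap2.det = 0 := det_zero_left _ _ h2a hm2H
  have d4 : Am2.det = 0 := by
    have := det_zero_right _ _ h2a hp2
    rw [Matrix.det_conjTranspose] at this
    exact star_eq_zero.mp this
  obtain ⟨a, b, ha, hb, hAp1⟩ := rank_one Ap1 hp1 d1
  obtain ⟨c, dv, hcne, hdne, hAm1⟩ := rank_one Am1 hm1 d2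
  obtain ⟨e, f, he, hf, hAp2⟩ := rank_one Ap2 hp2 d3
  obtain ⟨g, k, hg, hk, hAm2⟩ := rank_one Am2 hm2 d4
  have o1 : star c ⬝ᵥ a = 0 := by
    rw [hAm1, hAp1, conjT_vmv, vmv_mul_vmv] at h1b
    exact scalar_of_smul_vmv _ _ _ (star_ne _ hdne) hb h1b
  have o2 : star dv ⬝ᵥ b = 0 := by
    rw [hAp1, hAm1, conjT_vmv, vmv_mul_vmv] at h1a
    have := scalar_of_smul_vmv _ _ _ ha (star_ne _ hcne) h1a
    rwa [dotProduct_comm] at this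
  obtain ⟨γ, hγ, hcJ⟩ := perpJ a c ha hcne o1
  obtain ⟨δ, hδ, hdJ⟩ := perpJ b dv hb hdne o2
  have hAm1f : Am1 = (γ * δ) • vecMulVec (J a) (J b) := by
    rw [hAm1, hcJ, hdJ, vmv_smul_left, vmv_smul_right, smul_smul]
  have htne : γ * δ ≠ 0 := mul_ne_zero hγ hδ
  have o3 : star g ⬝ᵥ e = 0 := by
    rw [hAm2, hAp2, conjT_vmv, vmv_mul_vmv] at h2b
    exact scalar_of_smul_vmv _ _ _ (star_ne _ hk) hf h2b
  have o4 : star k ⬝ᵥ f = 0 := by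
    rw [hAp2, hAm2, conjT_vmv, vmv_mul_vmv] at h2a
    have := scalar_of_smul_vmv _ _ _ he (star_ne _ hg) h2a
    rwa [dotProduct_comm] at this
  obtain ⟨γ2, hγ2, hgJ⟩ := perpJ e g he hg o3
  obtain ⟨δ2, hδ2, hkJ⟩ := perpJ f k hf hk o4
  have hAm2f : Am2 = (γ2 * δ2) • vecMulVec (J e) (J f) := by
    rw [hAm2, hgJ, hkJ, vmv_smul_left, vmv_smul_right, smul_smul]
  have hune : γ2 * δ2 ≠ 0 := mul_ne_zero hγ2 hδ2
  set t : ℂ := γ * δ with htdef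
  set u : ℂ := γ2 * δ2 with hudef
  -- rewrite conditions (ii)
  rw [hAp1, hAp2, hAm1f, hAm2f] at h12c h12d
  simp only [conjTranspose_smul, conjT_vmv, smul_mul_assoc, mul_smul_comm,
    vmv_mul_vmv, smul_smul] at h12c h12d
  rw [dotJJ] at h12d
  -- common consequence of h12c (valid when the relevant scalar is nonzero)
  have hC : (star t * (star (J a) ⬝ᵥ e)) • vecMulVec (star (J b)) f
      = (star u * (star (J a) ⬝ᵥ e)) • vecMulVec (star (J f)) b := by
    rw [dotJswap a e, mul_neg, neg_smul, add_neg_eq_zero] at h12c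
    exact h12c
  by_cases hι : star e ⬝ᵥ a = 0
  · -- Case A : e ∥ J a
    obtain ⟨ε, hε, heJ⟩ := perpJ a e ha he hι
    have hχval : star (J a) ⬝ᵥ e = ε * (star a ⬝ᵥ a) := by
      rw [heJ]
      simp [dotProduct, Fin.sum_univ_two, Pi.smul_apply, smul_eq_mul,
        Pi.star_apply, J0, J1, Complex.star_def]
      ring
    have hχne : star (J a) ⬝ᵥ e ≠ 0 := by
      rw [hχval]; exact mul_ne_zero hε (dot_self_ne a ha)
    obtain ⟨μ, hμ, hfμ⟩ := rows_prop (star (J b)) f (star (J f)) b _ _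
      (mul_ne_zero (star_ne_zero.mpr htne) hχne) (star_ne _ (Jne b hb)) hf hC
    have hAp2f : Ap2 = (ε * μ) • vecMulVec (J a) b := by
      rw [hAp2, heJ, hfμ, vmv_smul_left, vmv_smul_right, smul_smul]
    have hAm2g : Am2 = (-(u * (starRingEnd ℂ) ε * (starRingEnd ℂ) μ))
        • vecMulVec a (J b) := by
      rw [hAm2f, heJ, hfμ]
      ext i j
      fin_cases i <;> fin_cases j <;>
        simp [vecMulVec_apply, Matrix.smul_apply, smul_eq_mul, J0, J1, Pi.smul_apply,
          _root_.map_mul, map_neg, Complex.conj_conj] <;> ring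
    rw [hAp1, hAm1f, hAp2f, hAm2g] at hnorm1 hsum
    obtain ⟨α, hα0, hα1, U, hU1, hU2, G1, G2, G3, G4⟩ :=
      core a b t (ε * μ) (-(u * (starRingEnd ℂ) ε * (starRingEnd ℂ) μ)) ha hb
        (mul_ne_zero hε hμ) hnorm1 hsum
    refine ⟨α, hα0, hα1, U, hU1, hU2, Or.inl ⟨?_, ?_, ?_, ?_⟩⟩
    · rw [hAp1]; exact G1
    · rw [hAm1f]; exact G2
    · rw [hAp2f]; exact G3
    · rw [hAm2g]; exact G4
  · -- Case B : e ∥ a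
    have hD : (u * (star t * (star e ⬝ᵥ a))) • vecMulVec (star (J b)) (J f)
        = (-(star e ⬝ᵥ a)) • vecMulVec (star f) b := by
      have h' := eq_neg_of_add_eq_zero_left h12d
      rw [← neg_smul] at h'
      exact h'
    obtain ⟨ν, hν, hJfν⟩ := rows_prop (star (J b)) (J f) (star f) b _ _
      (mul_ne_zero hune (mul_ne_zero (star_ne_zero.mpr htne) hι))
      (star_ne _ (Jne b hb)) (Jne f hf) hD
    have hfJ : f = (-(starRingEnd ℂ) ν) • J b := by
      have h1 : J (J f) = J (ν • b) := congrArg J hJfν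
      rw [JJ, Jsmul] at h1
      have h2 := congrArg Neg.neg h1
      rw [neg_neg] at h2
      rw [h2, ← neg_smul]
    have hχ : star (J a) ⬝ᵥ e = 0 := by
      by_contra hχne
      have hsJf : star (J f) = (starRingEnd ℂ) ν • star b := by
        rw [hJfν]
        funext i
        simp [Pi.star_apply, Pi.smul_apply, Complex.star_def, smul_eq_mul]
      rw [hsJf, hfJ, vmv_smul_left, vmv_smul_right, smul_smul, smul_smul] at hC
      obtain ⟨κ, hκ, hJbκ⟩ := rows_prop (star (J b)) (J b) (star b) b _ _
        (by
          refine mul_ne_zero (mul_ne_zero (star_ne_zero.mpr htne) hχne) ?_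
          simpa using hν)
        (star_ne _ (Jne b hb)) (Jne b hb) hC
      have h0 : b ⬝ᵥ star (J b) = 0 := dot_b_Jb b
      rw [hJbκ] at h0
      have hsκ : star (κ • b) = (starRingEnd ℂ) κ • star b := by
        funext i
        simp [Pi.star_apply, Pi.smul_apply, Complex.star_def, smul_eq_mul]
      rw [hsκ, dotProduct_smul, smul_eq_mul] at h0
      rcases mul_eq_zero.mp h0 with h' | h'
      · exact hκ (by simpa using congrArg (starRingEnd ℂ) h')
      · rw [dotProduct_comm] at h'
        exact dot_self_ne b hb h'
    obtain ⟨lam, hlam, heL⟩ := parJ a e ha he hχ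
    have hAp2f : Ap2 = (-(lam * (starRingEnd ℂ) ν)) • vecMulVec a (J b) := by
      rw [hAp2, heL, hfJ]
      ext i j
      fin_cases i <;> fin_cases j <;>
        simp [vecMulVec_apply, Matrix.smul_apply, smul_eq_mul, J0, J1, Pi.smul_apply,
          _root_.map_mul, map_neg, Complex.conj_conj] <;> ring
    have hAm2g : Am2 = (u * (starRingEnd ℂ) lam * ν) • vecMulVec (J a) b := by
      rw [hAm2f, heL, hJfν]
      ext i j
      fin_cases i <;> fin_cases j <;>
        simp [vecMulVec_apply, Matrix.smul_apply, smul_eq_mul, J0, J1, Pi.smul_apply,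
          _root_.map_mul, map_neg, Complex.conj_conj] <;> ring
    rw [add_right_comm] at hnorm1 hsum
    rw [hAp1, hAm1f, hAp2f, hAm2g] at hnorm1 hsum
    obtain ⟨α, hα0, hα1, U, hU1, hU2, G1, G2, G3, G4⟩ :=
      core a b t (u * (starRingEnd ℂ) lam * ν) (-(lam * (starRingEnd ℂ) ν)) ha hb
        (mul_ne_zero (mul_ne_zero hune (fun h0 => hlam (by simpa using congrArg (starRingEnd ℂ) h0))) hν) hnorm1 hsum
    refine ⟨α, hα0, hα1, U, hU1, hU2, Or.inr ⟨?_, ?_, ?_, ?_⟩⟩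
    · rw [hAp1]; exact G1
    · rw [hAm1f]; exact G2
    · rw [hAm2g]; exact G3
    · rw [hAp2f]; exact G4
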